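/- Let 0 < q < 1, ν ∈ ℝ, n ∈ ℤ and set ρ = iν + n. Define operators on functions f : ℂ∖{0} → ℂ by (Af)(z) = q^{(ρ−1)/2} f(q^{−1}z), (Bf)(z) = q^{ρ/2} (f(q^{−1}z) − f(qz)) / ((1−q²) z), (Cf)(z) = (z/(1−q²)) (−q^{(ρ+2)/2} f(q^{−1}z) + q^{−3ρ/2+3} f(qz)). Then the Casimir operator Ω_q = (q A² + q^{−1} A^{−2} − 2)/(q − q^{−1})² + C∘B, where (A²f)(z) = q^{ρ−1} f(q^{−2}z) and (A^{−2}f)(z) = q^{1−ρ} f(q²z), acts as the scalar ([−ρ/2]_q)², where [x]_q = (q^{x} − q^{−x})/(q − q^{−1}); that is, for every f and every z ≠ 0, (q (A²f)(z) + q^{−1} (A^{−2}f)(z) − 2 f(z))/(q − q^{−1})² + (C(Bf))(z) = ((q^{−ρ/2} − q^{ρ/2})/(q − q^{−1}))² · f(z). -/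

import Mathlib

/-- `q^w = exp(w ln q)` for real `q > 0` and complex `w`. -/
noncomputable def qpow (q : ℝ) (w : ℂ) : ℂ := Complex.exp (w * (Real.log q : ℂ))

/-- `(Af)(z) = q^{(ρ−1)/2} f(q⁻¹ z)`. -/
noncomputable def opA (q : ℝ) (ρ : ℂ) (f : ℂ → ℂ) : ℂ → ℂ :=
  fun z => qpow q ((ρ - 1) / 2) * f ((q : ℂ)⁻¹ * z)

/-- `(Bf)(z) = q^{ρ/2}(f(q⁻¹z) − f(qz))/((1−q²)z)`. -/
noncomputable def opB (q : ℝ) (ρ : ℂ) (f : ℂ → ℂ) : ℂ → ℂ :=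
  fun z => qpow q (ρ / 2) * (f ((q : ℂ)⁻¹ * z) - f ((q : ℂ) * z)) / ((1 - (q : ℂ) ^ 2) * z)

/-- `(Cf)(z) = (z/(1−q²))(−q^{(ρ+2)/2} f(q⁻¹z) + q^{−3ρ/2+3} f(qz))`. -/
noncomputable def opC (q : ℝ) (ρ : ℂ) (f : ℂ → ℂ) : ℂ → ℂ :=
  fun z => z / (1 - (q : ℂ) ^ 2) *
    (-(qpow q ((ρ + 2) / 2)) * f ((q : ℂ)⁻¹ * z) + qpow q (-(3 * ρ / 2) + 3) * f ((q : ℂ) * z))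

/-- `(A²f)(z) = q^{ρ−1} f(q⁻²z)`. -/
noncomputable def opA2 (q : ℝ) (ρ : ℂ) (f : ℂ → ℂ) : ℂ → ℂ :=
  fun z => qpow q (ρ - 1) * f (((q : ℂ) ^ 2)⁻¹ * z)

/-- `(A⁻²f)(z) = q^{1−ρ} f(q²z)`. -/
noncomputable def opAm2 (q : ℝ) (ρ : ℂ) (f : ℂ → ℂ) : ℂ → ℂ :=
  fun z => qpow q (1 - ρ) * f ((q : ℂ) ^ 2 * z)

theorem auxid (S w z a b c : ℂ) (hS : S ≠ 0) (hw : w ≠ 0) (hz : z ≠ 0)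
    (h2 : 1 - w ^ 2 ≠ 0) (hww : w - w⁻¹ ≠ 0) :
    (w * (S * S * w⁻¹ * a) + w⁻¹ * (w * S⁻¹ * S⁻¹ * c) - 2 * b) / ((1 - w ^ 2) ^ 2 / w ^ 2)
      + z / (1 - w ^ 2) *
        (-(S * w) * (S * (a - b) / ((1 - w ^ 2) * (w⁻¹ * z))) +
          S⁻¹ * S⁻¹ * S⁻¹ * w * w * w * (S * (b - c) / ((1 - w ^ 2) * (w * z))))
    = ((S⁻¹ - S) / (w - w⁻¹)) ^ 2 * b := by
  have L1 : (w * (S * S * w⁻¹ * a) + w⁻¹ * (w * S⁻¹ * S⁻¹ * c) - 2 * b) / ((1 - w ^ 2) ^ 2 / w ^ 2)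
      = (S ^ 2 * w ^ 2 * a + S⁻¹ ^ 2 * w ^ 2 * c - 2 * w ^ 2 * b) / (1 - w ^ 2) ^ 2 := by
    rw [div_div_eq_mul_div]
    congr 1
    field_simp
  have L2 : z / (1 - w ^ 2) *
        (-(S * w) * (S * (a - b) / ((1 - w ^ 2) * (w⁻¹ * z))) +
          S⁻¹ * S⁻¹ * S⁻¹ * w * w * w * (S * (b - c) / ((1 - w ^ 2) * (w * z))))
      = (-(S ^ 2 * w ^ 2) * (a - b) + S⁻¹ ^ 2 * w ^ 2 * (b - c)) / (1 - w ^ 2) ^ 2 := by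
    have hT1 : z / (1 - w ^ 2) * (-(S * w) * (S * (a - b) / ((1 - w ^ 2) * (w⁻¹ * z))))
        = -(S ^ 2 * w ^ 2) * (a - b) / (1 - w ^ 2) ^ 2 := by
      rw [mul_div_assoc', div_mul_div_comm,
        div_eq_div_iff
          (mul_ne_zero h2 (mul_ne_zero h2 (mul_ne_zero (inv_ne_zero hw) hz)))
          (pow_ne_zero 2 h2)]
      field_simp
    have hT2 : z / (1 - w ^ 2) * (S⁻¹ * S⁻¹ * S⁻¹ * w * w * w * (S * (b - c) / ((1 - w ^ 2) * (w * z))))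
        = S⁻¹ ^ 2 * w ^ 2 * (b - c) / (1 - w ^ 2) ^ 2 := by
      rw [mul_div_assoc', div_mul_div_comm,
        div_eq_div_iff
          (mul_ne_zero h2 (mul_ne_zero h2 (mul_ne_zero hw hz)))
          (pow_ne_zero 2 h2)]
      field_simp
    rw [mul_add, hT1, hT2, ← add_div]
  have R : ((S⁻¹ - S) / (w - w⁻¹)) ^ 2 * b
      = ((S⁻¹ - S) ^ 2 * w ^ 2 * b) / (1 - w ^ 2) ^ 2 := by
    have hww2 : w - w⁻¹ = -(1 - w ^ 2) / w := by field_simp; ring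
    rw [hww2, div_pow, show (-(1 - w ^ 2) / w) ^ 2 = (1 - w ^ 2) ^ 2 / w ^ 2 by
        rw [div_pow, neg_sq],
      div_div_eq_mul_div, div_mul_eq_mul_div]
  rw [L1, L2, R, ← add_div]
  congr 1
  rw [show (S⁻¹ - S) ^ 2 = S⁻¹ ^ 2 - 2 * (S⁻¹ * S) + S ^ 2 by ring,
    inv_mul_cancel₀ hS]
  ring

/-- On the principal series `V_{ν,n}` the Casimir operator
`Ω_q = (qA² + q⁻¹A⁻² − 2)/(q−q⁻¹)² + C∘B` acts as the scalar `([−ρ/2]_q)²`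
with `ρ = iν + n`, where `[x]_q = (q^x − q^{−x})/(q − q⁻¹)`. -/
theorem casimir_scalar_on_principal_series (q : ℝ) (hq0 : 0 < q) (hq1 : q < 1)
    (ν : ℝ) (n : ℤ) (ρ : ℂ) (hρ : ρ = Complex.I * ν + n)
    (f : ℂ → ℂ) (z : ℂ) (hz : z ≠ 0) :
    ((q : ℂ) * opA2 q ρ f z + (q : ℂ)⁻¹ * opAm2 q ρ f z - 2 * f z)
        / ((q : ℂ) - (q : ℂ)⁻¹) ^ 2
      + opC q ρ (opB q ρ f) z
    = ((qpow q (-(ρ / 2)) - qpow q (ρ / 2)) / ((q : ℂ) - (q : ℂ)⁻¹)) ^ 2 * f z := by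
  have hc : (q : ℂ) ≠ 0 := by exact_mod_cast hq0.ne'
  have hq2 : (1 : ℂ) - (q : ℂ) ^ 2 ≠ 0 := by
    have : ((1 - q ^ 2 : ℝ) : ℂ) ≠ 0 := by
      rw [Complex.ofReal_ne_zero]; nlinarith
    simpa using this
  have hqq : (q : ℂ) - (q : ℂ)⁻¹ ≠ 0 := by
    have : ((q - q⁻¹ : ℝ) : ℂ) ≠ 0 := by
      rw [Complex.ofReal_ne_zero]
      have h1 : 1 < q⁻¹ := (one_lt_inv₀ hq0).mpr hq1
      linarith
    simpa using this
  have qpow_add : ∀ a b : ℂ, qpow q (a + b) = qpow q a * qpow q b := by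
    intro a b; simp [qpow, add_mul, Complex.exp_add]
  have qpow_neg : ∀ a : ℂ, qpow q (-a) = (qpow q a)⁻¹ := by
    intro a; simp [qpow, Complex.exp_neg]
  have qpow_one : qpow q 1 = (q : ℂ) := by
    simp only [qpow, one_mul]
    rw [← Complex.ofReal_exp, Real.exp_log hq0]
  have hS : qpow q (ρ / 2) ≠ 0 := Complex.exp_ne_zero _
  simp only [opA2, opAm2, opB, opC]
  rw [show (ρ + 2) / 2 = ρ / 2 + 1 by ring,
      show -(3 * ρ / 2) + 3 = -(ρ / 2) + -(ρ / 2) + -(ρ / 2) + 1 + 1 + 1 by ring,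
      show ρ - 1 = ρ / 2 + ρ / 2 + -1 by ring,
      show 1 - ρ = 1 + -(ρ / 2) + -(ρ / 2) by ring]
  simp only [qpow_add, qpow_neg, qpow_one]
  rw [mul_inv_cancel_left₀ hc z, inv_mul_cancel_left₀ hc z,
      show (q : ℂ)⁻¹ * ((q : ℂ)⁻¹ * z) = ((q : ℂ) ^ 2)⁻¹ * z by
        rw [← mul_assoc, ← mul_inv, ← sq],
      show (q : ℂ) * ((q : ℂ) * z) = (q : ℂ) ^ 2 * z by ring,
      show ((q : ℂ) - (q : ℂ)⁻¹) ^ 2 = (1 - (q : ℂ) ^ 2) ^ 2 / (q : ℂ) ^ 2 by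
        field_simp; ring]
  exact auxid (qpow q (ρ / 2)) (q : ℂ) z (f (((q : ℂ) ^ 2)⁻¹ * z)) (f z)
    (f ((q : ℂ) ^ 2 * z)) hS hc hz hq2 hqq
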